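/- arXiv:0802.0159 — 2 statements merged into one kernel-verified Lean document; each statement's English description precedes it below -/
import Mathlib

section
/- Let D ⊂ ℂⁿ be a bounded domain with connected smooth boundary, L ⊂ ∂D compact with A(D)-hull ĤL satisfying ĤL ∩ ∂D = L. If ∂D ∖ L is connected, then D ∖ ĤL is connected. -/
open Complex Metric Set

noncomputable section

/-- The algebra `A(D) = C⁰(closure D) ∩ O(D)` of functions continuous on `closure D`
and holomorphic on `D`. -/
def Aalg (n : ℕ) (D : Set (EuclideanSpace ℂ (Fin n))) :
    Set (EuclideanSpace ℂ (Fin n) → ℂ) :=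
  {f | ContinuousOn f (closure D) ∧ DifferentiableOn ℂ f D}

/-- The `A(D)`-envelope (hull) of a subset `L` of `closure D`:
`ĤL = {z ∈ closure D : |f(z)| ≤ max_L |f| ∀ f ∈ A(D)}`. -/
def hullA (n : ℕ) (D L : Set (EuclideanSpace ℂ (Fin n))) :
    Set (EuclideanSpace ℂ (Fin n)) :=
  {z ∈ closure D | ∀ f ∈ Aalg n D, ‖f z‖ ≤ sSup ((fun w => ‖f w‖) '' L)}

/-- `D` has smooth boundary: it is globally defined by a smooth function `ρ` with
non-vanishing differential along `∂D`. -/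
def HasSmoothBoundary (n : ℕ) (D : Set (EuclideanSpace ℂ (Fin n))) : Prop :=
  ∃ ρ : EuclideanSpace ℂ (Fin n) → ℝ, ContDiff ℝ (⊤ : ℕ∞) ρ ∧
    D = {x | ρ x < 0} ∧ ∀ x ∈ frontier D, fderiv ℝ ρ x ≠ 0

/-- Near a smooth boundary point, any two nearby points of `{ρ < 0}` can be joined
inside a preconnected subset of `{ρ < 0}` lying in a prescribed ball. -/
lemma local_join {E : Type*} [NormedAddCommGroup E] [NormedSpace ℝ E]
    {ρ : E → ℝ} (hρ : ContDiff ℝ (⊤ : ℕ∞) ρ) {p : E} (hd : fderiv ℝ ρ p ≠ 0)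
    {r₀ : ℝ} (hr₀ : 0 < r₀) :
    ∃ r > 0, ∀ x ∈ ball p r, ρ x < 0 → ∀ y ∈ ball p r, ρ y < 0 →
      ∃ S : Set E, IsPreconnected S ∧ x ∈ S ∧ y ∈ S ∧ S ⊆ ball p r₀ ∧ ∀ z ∈ S, ρ z < 0 := by
  classical
  set F := fderiv ℝ ρ with hF
  have hρdiff : Differentiable ℝ ρ := hρ.differentiable (by simp)
  have hFc : Continuous F := hρ.continuous_fderiv (by simp)
  obtain ⟨v, hFpv⟩ : ∃ v, F p v = -1 := by
    obtain ⟨v₀, hv₀⟩ : ∃ v, F p v ≠ 0 := by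
      by_contra h
      push_neg at h
      exact hd (ContinuousLinearMap.ext fun v => by simpa using h v)
    refine ⟨(-(F p v₀)⁻¹) • v₀, ?_⟩
    rw [(F p).map_smul]
    field_simp
    simp [hv₀]
  set M : ℝ := ‖F p‖ + 1 with hM
  have hM1 : 1 ≤ M := by have := norm_nonneg (F p); simp only [hM]; linarith
  have hΩ : IsOpen ({z | F z v < -(1/2)} ∩ {z | ‖F z‖ < M}) := by
    apply IsOpen.inter
    · exact isOpen_lt (hFc.clm_apply continuous_const) continuous_const
    · exact isOpen_lt hFc.norm continuous_const
  have hpΩ : p ∈ ({z | F z v < -(1/2)} ∩ {z | ‖F z‖ < M}) := by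
    constructor
    · simp only [mem_setOf_eq, hFpv]; norm_num
    · simp only [mem_setOf_eq, hM]; linarith
  obtain ⟨R₁, hR₁, hball⟩ := Metric.isOpen_iff.mp hΩ p hpΩ
  set R : ℝ := min (R₁ / 2) (r₀ / 2) with hRdef
  have hRpos : 0 < R := lt_min (by linarith) (by linarith)
  have hRΩ : closedBall p R ⊆ {z | F z v < -(1/2)} ∩ {z | ‖F z‖ < M} :=
    (closedBall_subset_ball (lt_of_le_of_lt (min_le_left _ _) (by linarith))).trans hball
  have hRr₀ : closedBall p R ⊆ ball p r₀ :=
    closedBall_subset_ball (lt_of_le_of_lt (min_le_right _ _) (by linarith))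
  set T : ℝ := R / (2 * (‖v‖ + 1)) with hT
  have hvpos : (0:ℝ) < ‖v‖ + 1 := by have := norm_nonneg v; linarith
  have hTpos : 0 < T := by positivity
  have hTv : T * ‖v‖ ≤ R / 2 := by
    rw [hT]
    rw [div_mul_eq_mul_div, div_le_div_iff₀ (by linarith) (by norm_num)]
    nlinarith [norm_nonneg v]
  -- key decrease estimate
  have key : ∀ x ∈ closedBall p (R/2), ρ x < 0 → ∀ t ∈ Icc (0:ℝ) T,
      x + t • v ∈ closedBall p R ∧ ρ (x + t • v) ≤ ρ x - t / 2 := by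
    intro x hx hρx t ht
    have hmem : ∀ s ∈ Icc (0:ℝ) T, x + s • v ∈ closedBall p R := by
      intro s hs
      have : dist (x + s • v) p ≤ dist (x + s • v) x + dist x p := dist_triangle _ _ _
      have h1 : dist (x + s • v) x = s * ‖v‖ := by
        rw [dist_eq_norm, add_sub_cancel_left, norm_smul, Real.norm_eq_abs,
          _root_.abs_of_nonneg hs.1]
      have h2 : dist x p ≤ R / 2 := mem_closedBall.mp hx
      have h3 : s * ‖v‖ ≤ T * ‖v‖ := by
        apply mul_le_mul_of_nonneg_right hs.2 (norm_nonneg v)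
      rw [mem_closedBall]
      linarith
    refine ⟨hmem t ht, ?_⟩
    set h : ℝ → ℝ := fun s => ρ (x + s • v) + s / 2 with hhdef
    have hderiv : ∀ s : ℝ, HasDerivAt h (F (x + s • v) v + 1/2) s := by
      intro s
      have hlin : HasDerivAt (fun s : ℝ => x + s • v) v s := by
        simpa using (((hasDerivAt_id s).smul_const v).const_add x)
      have hcomp : HasDerivAt (fun s : ℝ => ρ (x + s • v)) (F (x + s • v) v) s := by
        have := ((hρdiff (x + s • v)).hasFDerivAt).comp_hasDerivAt s hlin
        exact this
      exact (hcomp.add ((hasDerivAt_id s).div_const 2)).congr_deriv (by norm_num)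
    have hanti : AntitoneOn h (Icc 0 T) := by
      apply antitoneOn_of_deriv_nonpos (convex_Icc 0 T)
      · exact fun s _ => ((hderiv s).continuousAt).continuousWithinAt
      · intro s hs
        exact ((hderiv s).differentiableAt).differentiableWithinAt
      · intro s hs
        rw [interior_Icc] at hs
        rw [(hderiv s).deriv]
        have hsmem := hmem s ⟨hs.1.le, hs.2.le⟩
        have := (hRΩ hsmem).1
        simp only [mem_setOf_eq] at this
        linarith
    have := hanti (left_mem_Icc.mpr hTpos.le) ht ht.1
    simp only [hhdef, zero_smul, add_zero, zero_div] at this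
    linarith
  -- Lipschitz bound on the big ball
  have hLip : ∀ a ∈ closedBall p R, ∀ b ∈ closedBall p R, ‖ρ b - ρ a‖ ≤ M * ‖b - a‖ := by
    intro a ha b hb
    exact (convex_closedBall p R).norm_image_sub_le_of_norm_fderiv_le
      (fun z _ => hρdiff z) (fun z hz => ((hRΩ hz).2).le) ha hb
  set r : ℝ := min (R/6) (T/(8*M)) with hrdef
  have hrpos : 0 < r := lt_min (by linarith) (by positivity)
  refine ⟨r, hrpos, ?_⟩
  intro x hx hρx y hy hρy
  have hrR6 : r ≤ R/6 := min_le_left _ _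
  have hrT : r ≤ T/(8*M) := min_le_right _ _
  have hxR2 : x ∈ closedBall p (R/2) := by
    rw [mem_closedBall]
    have := mem_ball.mp hx
    linarith
  have hyR2 : y ∈ closedBall p (R/2) := by
    rw [mem_closedBall]
    have := mem_ball.mp hy
    linarith
  set x' := x + T • v with hx'
  set y' := y + T • v with hy'
  have keyx := key x hxR2 hρx
  have keyy := key y hyR2 hρy
  have hTmem : T ∈ Icc (0:ℝ) T := right_mem_Icc.mpr hTpos.le
  have hx'R := (keyx T hTmem).1
  have hρx' : ρ x' ≤ ρ x - T/2 := (keyx T hTmem).2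
  have hxy : ‖y - x‖ < 2 * r := by
    have h1 : dist y p < r := mem_ball.mp hy
    have h2 : dist x p < r := mem_ball.mp hx
    calc ‖y - x‖ = dist y x := (dist_eq_norm y x).symm
    _ ≤ dist y p + dist p x := dist_triangle y p x
    _ < r + r := by rw [dist_comm p x]; linarith
    _ = 2 * r := by ring
  have hMpos : (0:ℝ) < M := by linarith
  have h2rM : 2 * r * M ≤ T / 4 := by
    have : r * (8 * M) ≤ (T / (8 * M)) * (8 * M) :=
      mul_le_mul_of_nonneg_right hrT (by positivity)
    rw [div_mul_cancel₀ _ (by positivity : (8:ℝ) * M ≠ 0)] at this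
    nlinarith
  -- the three segments
  have hseg1 : ∀ a ∈ ball p r, ρ a < 0 → ∀ z ∈ segment ℝ a (a + T • v),
      z ∈ closedBall p R ∧ ρ z < 0 := by
    intro a ha hρa z hz
    have haR2 : a ∈ closedBall p (R/2) := by
      rw [mem_closedBall]
      have := mem_ball.mp ha
      linarith
    rw [segment_eq_image'] at hz
    obtain ⟨θ, hθ, rfl⟩ := hz
    have hsub : a + T • v - a = T • v := by abel
    simp only [hsub, smul_smul]
    have htmem : θ * T ∈ Icc (0:ℝ) T := by
      constructor
      · exact mul_nonneg hθ.1 hTpos.le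
      · calc θ * T ≤ 1 * T := mul_le_mul_of_nonneg_right hθ.2 hTpos.le
        _ = T := one_mul T
    have hk := key a haR2 hρa (θ * T) htmem
    exact ⟨hk.1, by linarith [hk.2, htmem.1]⟩
  -- middle segment
  have hseg2 : ∀ z ∈ segment ℝ x' y', z ∈ closedBall p R ∧ ρ z < 0 := by
    intro z hz
    rw [segment_eq_image'] at hz
    obtain ⟨θ, hθ, rfl⟩ := hz
    have hyx : y' - x' = y - x := by rw [hx', hy']; abel
    rw [hyx]
    have hθn : ‖θ • (y - x)‖ ≤ 2 * r := by
      rw [norm_smul, Real.norm_eq_abs, _root_.abs_of_nonneg hθ.1]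
      calc θ * ‖y - x‖ ≤ 1 * ‖y - x‖ :=
        mul_le_mul_of_nonneg_right hθ.2 (norm_nonneg _)
      _ = ‖y - x‖ := one_mul _
      _ ≤ 2 * r := hxy.le
    have hzR : x' + θ • (y - x) ∈ closedBall p R := by
      rw [mem_closedBall, dist_eq_norm]
      have hrw : x' + θ • (y - x) - p = (x - p) + T • v + θ • (y - x) := by
        rw [hx']; abel
      rw [hrw]
      have h1 : ‖(x - p) + T • v + θ • (y - x)‖ ≤ ‖x - p‖ + ‖T • v‖ + ‖θ • (y - x)‖ :=
        (norm_add_le _ _).trans (by gcongr; exact norm_add_le _ _)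
      have h2 : ‖x - p‖ < r := by rw [← dist_eq_norm]; exact mem_ball.mp hx
      have h3 : ‖T • v‖ ≤ R / 2 := by
        rw [norm_smul, Real.norm_eq_abs, _root_.abs_of_nonneg hTpos.le]; exact hTv
      linarith
    refine ⟨hzR, ?_⟩
    have hlip := hLip x' hx'R (x' + θ • (y - x)) hzR
    have : ‖x' + θ • (y - x) - x'‖ = ‖θ • (y - x)‖ := by rw [add_sub_cancel_left]
    rw [this] at hlip
    have h4 : ρ (x' + θ • (y - x)) - ρ x' ≤ M * (2 * r) := by
      calc ρ (x' + θ • (y - x)) - ρ x' ≤ ‖ρ (x' + θ • (y - x)) - ρ x'‖ :=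
        (le_abs_self _).trans_eq (Real.norm_eq_abs _).symm
      _ ≤ M * ‖θ • (y - x)‖ := hlip
      _ ≤ M * (2 * r) := mul_le_mul_of_nonneg_left hθn hMpos.le
    have h5 : M * (2 * r) = 2 * r * M := by ring
    rw [h5] at h4
    show ρ (x' + θ • (y - x)) < 0
    calc ρ (x' + θ • (y - x)) ≤ ρ x' + 2 * r * M := by linarith [h4]
    _ ≤ (ρ x - T / 2) + 2 * r * M := by linarith [hρx']
    _ ≤ (ρ x - T / 2) + T / 4 := by linarith [h2rM]
    _ < 0 := by linarith [hρx, hTpos]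
  refine ⟨segment ℝ x x' ∪ (segment ℝ x' y' ∪ segment ℝ y y'), ?_, ?_, ?_, ?_, ?_⟩
  · apply IsPreconnected.union x' (right_mem_segment ℝ x x')
      (mem_union_left _ (left_mem_segment ℝ x' y'))
      (convex_segment x x').isPreconnected
    apply IsPreconnected.union y' (right_mem_segment ℝ x' y')
      (by rw [hy']; exact right_mem_segment ℝ y (y + T • v))
      (convex_segment x' y').isPreconnected (convex_segment y y').isPreconnected
  · exact mem_union_left _ (left_mem_segment ℝ x x')
  · exact mem_union_right _ (mem_union_right _ (left_mem_segment ℝ y y'))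
  · rintro z (hz | hz | hz)
    · exact hRr₀ (hseg1 x hx hρx z hz).1
    · exact hRr₀ (hseg2 z hz).1
    · exact hRr₀ (hseg1 y hy hρy z hz).1
  · rintro z (hz | hz | hz)
    · exact (hseg1 x hx hρx z hz).2
    · exact (hseg2 z hz).2
    · exact (hseg1 y hy hρy z hz).2

/-- let `D ⊆ ℂⁿ` be a bounded domain with connected smooth boundary and
`L ⊆ ∂D` compact with `A(D)`-hull `ĤL` satisfying `ĤL ∩ ∂D = L`.  If `∂D ∖ L` is
connected, then `D ∖ ĤL` is connected. -/
theorem complement_of_hull_connected (n : ℕ)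
    (D L : Set (EuclideanSpace ℂ (Fin n)))
    (hDopen : IsOpen D) (hDconn : IsConnected D) (hDbd : Bornology.IsBounded D)
    (hDsmooth : HasSmoothBoundary n D) (hbdry_conn : IsConnected (frontier D))
    (hL : L ⊆ frontier D) (hLc : IsCompact L)
    (hhull : hullA n D L ∩ frontier D = L)
    (hconn : IsConnected (frontier D \ L)) :
    IsConnected (D \ hullA n D L) := by
  classical
  rcases Nat.eq_zero_or_pos n with hn | hn
  · subst hn
    exfalso
    haveI : Subsingleton (EuclideanSpace ℂ (Fin 0)) :=
      ⟨fun a b => by ext i; exact absurd i.2 (by omega)⟩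
    obtain ⟨x, hx⟩ := hDconn.nonempty
    have hDuniv : D = univ := eq_univ_of_forall fun y => (Subsingleton.elim y x) ▸ hx
    have := hbdry_conn.nonempty
    rw [hDuniv, frontier_univ] at this
    exact not_nonempty_empty this
  haveI : Nontrivial (EuclideanSpace ℂ (Fin n)) :=
    ⟨⟨EuclideanSpace.single ⟨0, hn⟩ 1, 0, by
      intro h
      have := congrArg (fun f => f ⟨0, hn⟩) h
      simp [EuclideanSpace.single_apply] at this⟩⟩
  obtain ⟨ρ, hρ, hDρ, hdρ⟩ := hDsmooth
  set K := hullA n D L with hK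
  have hfr : frontier D = closure D \ D := hDopen.frontier_eq
  have hLK : L ⊆ K := by
    intro z hz
    refine ⟨frontier_subset_closure (hL hz), ?_⟩
    intro f hf
    apply le_csSup
    · exact (hLc.image_of_continuousOn
        ((hf.1.mono (hL.trans frontier_subset_closure)).norm)).bddAbove
    · exact mem_image_of_mem _ hz
  have hKcl : IsClosed K := by
    have hKeq : K = closure D ∩ ⋂ f ∈ Aalg n D,
        (closure D ∩ (fun z => ‖f z‖) ⁻¹' Iic (sSup ((fun w => ‖f w‖) '' L))) := by
      ext z
      simp only [hK, hullA, mem_sep_iff, mem_inter_iff, mem_iInter, mem_preimage, mem_Iic,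
        mem_setOf_eq]
      constructor
      · rintro ⟨h1, h2⟩
        exact ⟨h1, fun f hf => ⟨h1, h2 f hf⟩⟩
      · rintro ⟨h1, h2⟩
        exact ⟨h1, fun f hf => (h2 f hf).2⟩
    rw [hKeq]
    refine isClosed_closure.inter (isClosed_biInter fun f hf => ?_)
    exact hf.1.norm.preimage_isClosed_of_isClosed isClosed_closure isClosed_Iic
  have hnotK : ∀ p ∈ frontier D \ L, p ∉ K := by
    intro p hp hpK
    exact hp.2 (hhull ▸ (mem_inter hpK hp.1))
  have hfrτ : ∀ p ∈ frontier D, ∀ ε > 0, (ball p ε ∩ D).Nonempty := by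
    intro p hp ε hε
    rw [hfr] at hp
    obtain ⟨q, hq1, hq2⟩ := Metric.mem_closure_iff.mp hp.1 ε hε
    exact ⟨q, by rwa [mem_ball, dist_comm], hq1⟩
  -- fact A : every relatively clopen piece of D \ K attaches to ∂D \ L
  have factA : ∀ V : Set (EuclideanSpace ℂ (Fin n)), IsOpen V → V.Nonempty → V ⊆ D \ K →
      (closure V ∩ (D \ K) ⊆ V) → (closure V ∩ (frontier D \ L)).Nonempty := by
    intro V hVo hVne hVsub hVrel
    by_contra hempty
    rw [not_nonempty_iff_eq_empty] at hempty
    have hVD : V ⊆ D := hVsub.trans diff_subset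
    have hfrV : frontier V ⊆ K := by
      intro z hz
      rw [hVo.frontier_eq] at hz
      have hzcl : z ∈ closure D := closure_mono hVD hz.1
      by_cases hzD : z ∈ D
      · by_cases hzK : z ∈ K
        · exact hzK
        · exact absurd (hVrel ⟨hz.1, hzD, hzK⟩) hz.2
      · have hzfr : z ∈ frontier D := hfr ▸ ⟨hzcl, hzD⟩
        have hzL : z ∈ L := by
          by_contra hzL
          exact (eq_empty_iff_forall_notMem.mp hempty z) ⟨hz.1, hzfr, hzL⟩
        exact hLK hzL
    obtain ⟨x, hx⟩ := hVne
    have hxK : x ∈ K := by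
      refine ⟨subset_closure ((hVsub hx).1), ?_⟩
      intro f hf
      refine Complex.norm_le_of_forall_mem_frontier_norm_le (hDbd.subset hVD)
        ⟨hf.2.mono hVD, hf.1.mono (closure_mono hVD)⟩ ?_ (subset_closure hx)
      intro w hw
      exact (hfrV hw).2 f hf
    exact (hVsub hx).2 hxK
  obtain ⟨p₀, hp₀⟩ := hconn.nonempty
  have hUne : (D \ K).Nonempty := by
    obtain ⟨ε, hε, hball⟩ := Metric.isOpen_iff.mp hKcl.isOpen_compl p₀ (hnotK p₀ hp₀)
    obtain ⟨q, hq⟩ := hfrτ p₀ hp₀.1 ε hε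
    exact ⟨q, hq.2, hball hq.1⟩
  refine ⟨hUne, ?_⟩
  intro s t hs ht hcover hsne htne
  by_contra hst
  rw [not_nonempty_iff_eq_empty] at hst
  set U := D \ K with hU
  set V₁ := U ∩ s with hV₁
  set V₂ := U ∩ t with hV₂
  have hUo : IsOpen U := hDopen.sdiff hKcl
  have hdisj : V₁ ∩ V₂ = ∅ := by
    have hsub : V₁ ∩ V₂ ⊆ U ∩ (s ∩ t) := by
      rintro z ⟨⟨hz1, hz2⟩, ⟨_, hz3⟩⟩
      exact ⟨hz1, hz2, hz3⟩
    exact subset_empty_iff.mp (hst ▸ hsub)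
  have hrel : ∀ (a b : Set (EuclideanSpace ℂ (Fin n))), IsOpen b → U ⊆ a ∪ b →
      U ∩ (a ∩ b) = ∅ → closure (U ∩ a) ∩ U ⊆ U ∩ a := by
    intro a b hb hUab hab z hz
    rcases hUab hz.2 with h | h
    · exact ⟨hz.2, h⟩
    · exfalso
      obtain ⟨w, hwb, hwU, hwa⟩ := (_root_.mem_closure_iff.mp hz.1) b hb h
      exact (eq_empty_iff_forall_notMem.mp hab w) ⟨hwU, hwa, hwb⟩
  have hts : U ∩ (t ∩ s) = ∅ := by rw [inter_comm t s]; exact hst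
  have hUts : U ⊆ t ∪ s := fun z hz => (hcover hz).symm
  obtain ⟨q₁, hq₁V, hq₁A⟩ := factA V₁ (hUo.inter hs) hsne inter_subset_left
    (hrel s t ht hcover hst)
  obtain ⟨q₂, hq₂V, hq₂A⟩ := factA V₂ (hUo.inter ht) htne inter_subset_left
    (hrel t s hs hUts hts)
  -- fact B : near each point of ∂D \ L, all of D lies on one side
  have factB : ∀ p ∈ frontier D \ L, ∃ r, 0 < r ∧ (ball p r ∩ D).Nonempty ∧
      (ball p r ∩ D ⊆ V₁ ∨ ball p r ∩ D ⊆ V₂) := by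
    intro p hp
    obtain ⟨r₀, hr₀, hball₀⟩ := Metric.isOpen_iff.mp hKcl.isOpen_compl p (hnotK p hp)
    obtain ⟨r, hr, hjoin⟩ := local_join hρ (hdρ p hp.1) hr₀
    set r' := min r r₀ with hr'def
    have hr' : 0 < r' := lt_min hr hr₀
    have hsub_r : ball p r' ⊆ ball p r := ball_subset_ball (min_le_left _ _)
    have hne2 : (ball p r' ∩ D).Nonempty := hfrτ p hp.1 r' hr'
    have hUball : ∀ z ∈ ball p r₀ ∩ D, z ∈ U := fun z hz => ⟨hz.2, hball₀ hz.1⟩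
    have hsame : ∀ (a b : Set (EuclideanSpace ℂ (Fin n))), IsOpen a → IsOpen b →
        U ⊆ a ∪ b → U ∩ (a ∩ b) = ∅ →
        ∀ x ∈ ball p r' ∩ D, ∀ y ∈ ball p r' ∩ D, x ∈ U ∩ a → y ∈ U ∩ a := by
      intro a b ha hb hUab hab x hx y hy hxa
      have hρx : ρ x < 0 := by have := hx.2; rwa [hDρ, mem_setOf_eq] at this
      have hρy : ρ y < 0 := by have := hy.2; rwa [hDρ, mem_setOf_eq] at this
      obtain ⟨S, hSpre, hxS, hyS, hSr₀, hSneg⟩ :=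
        hjoin x (hsub_r hx.1) hρx y (hsub_r hy.1) hρy
      have hSU : S ⊆ U := by
        intro z hz
        refine hUball z ⟨hSr₀ hz, ?_⟩
        rw [hDρ, mem_setOf_eq]
        exact hSneg z hz
      have hyU : y ∈ U := hSU hyS
      rcases hUab hyU with h | h
      · exact ⟨hyU, h⟩
      · exfalso
        obtain ⟨w, hwS, hwa, hwb⟩ := hSpre a b ha hb (fun z hz => hUab (hSU hz))
          ⟨x, hxS, hxa.2⟩ ⟨y, hyS, h⟩
        exact (eq_empty_iff_forall_notMem.mp hab w) ⟨hSU hwS, hwa, hwb⟩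
    refine ⟨r', hr', hne2, ?_⟩
    obtain ⟨x₀, hx₀⟩ := hne2
    have hx₀U : x₀ ∈ U := hUball x₀ ⟨ball_subset_ball (min_le_right _ _) hx₀.1, hx₀.2⟩
    rcases hcover hx₀U with h | h
    · exact Or.inl (fun z hz => hsame s t hs ht hcover hst x₀ hx₀ z hz ⟨hx₀U, h⟩)
    · exact Or.inr (fun z hz => hsame t s ht hs hUts hts x₀ hx₀ z hz ⟨hx₀U, h⟩)
  choose! rad hradpos hradne hradside using factB
  set A := frontier D \ L with hA
  set T₁ := {p | p ∈ A ∧ ball p (rad p) ∩ D ⊆ V₁} with hT₁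
  set T₂ := {p | p ∈ A ∧ ball p (rad p) ∩ D ⊆ V₂} with hT₂
  set O₁ := ⋃ p ∈ T₁, ball p (rad p) with hO₁
  set O₂ := ⋃ p ∈ T₂, ball p (rad p) with hO₂
  have hO₁o : IsOpen O₁ := isOpen_biUnion fun _ _ => isOpen_ball
  have hO₂o : IsOpen O₂ := isOpen_biUnion fun _ _ => isOpen_ball
  have hmemO : ∀ p ∈ A, (ball p (rad p) ∩ D ⊆ V₁ → p ∈ O₁) ∧
      (ball p (rad p) ∩ D ⊆ V₂ → p ∈ O₂) := by
    intro p hp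
    constructor
    · intro h
      exact mem_biUnion ⟨hp, h⟩ (mem_ball_self (hradpos p hp))
    · intro h
      exact mem_biUnion ⟨hp, h⟩ (mem_ball_self (hradpos p hp))
  have hcover' : A ⊆ O₁ ∪ O₂ := by
    intro p hp
    rcases hradside p hp with h | h
    · exact Or.inl ((hmemO p hp).1 h)
    · exact Or.inr ((hmemO p hp).2 h)
  -- attachment points are in the right pieces
  have hattach : ∀ q ∈ A, ∀ (W O : Set (EuclideanSpace ℂ (Fin n))),
      (ball q (rad q) ∩ D ⊆ W → q ∈ O) → W ⊆ D →
      (ball q (rad q) ∩ D ⊆ W ∨ (∃ W', W' ∩ W = ∅ ∧ ball q (rad q) ∩ D ⊆ W')) →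
      q ∈ closure W → (ball q (rad q) ∩ D ⊆ W) := by
    intro q hq W O hO hWD hside hqcl
    rcases hside with h | ⟨W', hW'W, hW'⟩
    · exact h
    · exfalso
      obtain ⟨w, hwball, hwW⟩ := (_root_.mem_closure_iff.mp hqcl) (ball q (rad q))
        isOpen_ball (mem_ball_self (hradpos q hq))
      have hwD : w ∈ D := hWD hwW
      exact (eq_empty_iff_forall_notMem.mp hW'W w) ⟨hW' ⟨hwball, hwD⟩, hwW⟩
  have hq₁O : q₁ ∈ O₁ := by
    rcases hradside q₁ hq₁A with h | h
    · exact (hmemO q₁ hq₁A).1 h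
    · exfalso
      obtain ⟨w, hwball, hwV₁⟩ := (_root_.mem_closure_iff.mp hq₁V) (ball q₁ (rad q₁))
        isOpen_ball (mem_ball_self (hradpos q₁ hq₁A))
      have hwV₂ : w ∈ V₂ := h ⟨hwball, hwV₁.1.1⟩
      exact (eq_empty_iff_forall_notMem.mp hdisj w) ⟨hwV₁, hwV₂⟩
  have hq₂O : q₂ ∈ O₂ := by
    rcases hradside q₂ hq₂A with h | h
    · exfalso
      obtain ⟨w, hwball, hwV₂⟩ := (_root_.mem_closure_iff.mp hq₂V) (ball q₂ (rad q₂))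
        isOpen_ball (mem_ball_self (hradpos q₂ hq₂A))
      have hwV₁ : w ∈ V₁ := h ⟨hwball, hwV₂.1.1⟩
      exact (eq_empty_iff_forall_notMem.mp hdisj w) ⟨hwV₁, hwV₂⟩
    · exact (hmemO q₂ hq₂A).2 h
  obtain ⟨z, hzA, hzO₁, hzO₂⟩ := hconn.isPreconnected O₁ O₂ hO₁o hO₂o hcover'
    ⟨q₁, hq₁A, hq₁O⟩ ⟨q₂, hq₂A, hq₂O⟩
  simp only [hO₁, hO₂, mem_iUnion, exists_prop] at hzO₁ hzO₂
  obtain ⟨p₁, hp₁T, hzp₁⟩ := hzO₁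
  obtain ⟨p₂, hp₂T, hzp₂⟩ := hzO₂
  set δ := min (rad p₁ - dist z p₁) (rad p₂ - dist z p₂) with hδ
  have hδpos : 0 < δ := by
    apply lt_min
    · have := mem_ball.mp hzp₁; linarith
    · have := mem_ball.mp hzp₂; linarith
  obtain ⟨w, hwball, hwD⟩ := hfrτ z hzA.1 δ hδpos
  have hw₁ : w ∈ ball p₁ (rad p₁) := by
    rw [mem_ball] at *
    calc dist w p₁ ≤ dist w z + dist z p₁ := dist_triangle w z p₁
    _ < δ + dist z p₁ := by linarith [hwball]
    _ ≤ (rad p₁ - dist z p₁) + dist z p₁ := by have := min_le_left (rad p₁ - dist z p₁) (rad p₂ - dist z p₂); linarith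
    _ = rad p₁ := by ring
  have hw₂ : w ∈ ball p₂ (rad p₂) := by
    rw [mem_ball] at *
    calc dist w p₂ ≤ dist w z + dist z p₂ := dist_triangle w z p₂
    _ < δ + dist z p₂ := by linarith [hwball]
    _ ≤ (rad p₂ - dist z p₂) + dist z p₂ := by have := min_le_right (rad p₁ - dist z p₁) (rad p₂ - dist z p₂); linarith
    _ = rad p₂ := by ring
  have hwV₁ : w ∈ V₁ := hp₁T.2 ⟨hw₁, hwD⟩
  have hwV₂ : w ∈ V₂ := hp₂T.2 ⟨hw₂, hwD⟩
  exact (eq_empty_iff_forall_notMem.mp hdisj w) ⟨hwV₁, hwV₂⟩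
end
end

section
/- In ℂⁿ with n ≥ 5, let L = ∂𝔹ⁿ ∩ {z_{n−2} = z_{n−1} = z_n = 0}, whose A(𝔹ⁿ)-hull ĤL contains the set {z_{n−2} = z_{n−1} = z_n = 0, |z'| ≤ 1}. The set Y = ⋃_{k ∈ ℤ, k ≠ 0} {z ∈ 𝔹ⁿ : z_{n−2} = z_{n−1} = 0, z_n = 1/k} is a closed analytic subset of 𝔹ⁿ ∖ ĤL that does not extend to a closed analytic subset of 𝔹ⁿ ∖ L: its closure in 𝔹ⁿ ∖ L is not analytic at points of (ĤL ∖ L) ∩ {z_{n−2} = z_{n−1} = z_n = 0}. -/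
open Complex Metric Set

noncomputable section

/-- `T` is an analytic subset of `B`: locally in `B` it is the common zero set of a
family of holomorphic functions. -/
def IsAnalyticSubset (n : ℕ) (B T : Set (EuclideanSpace ℂ (Fin n))) : Prop :=
  T ⊆ B ∧ ∀ z ∈ B, ∃ U : Set (EuclideanSpace ℂ (Fin n)), IsOpen U ∧ z ∈ U ∧ U ⊆ B ∧
    ∃ (ι : Type) (g : ι → EuclideanSpace ℂ (Fin n) → ℂ),
      (∀ i, DifferentiableOn ℂ (g i) U) ∧ T ∩ U = {w ∈ U | ∀ i, g i w = 0}

/-- The coordinate subspace `{z_{n−2} = z_{n−1} = z_n = 0}` (the last three coordinates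
vanish; `0`-based indices `n−3, n−2, n−1`). -/
def lastThreeZero (n : ℕ) : Set (EuclideanSpace ℂ (Fin n)) :=
  {z | ∀ i : Fin n, n - 3 ≤ (i : ℕ) → z i = 0}

/-- `L = ∂𝔹ⁿ ∩ {z_{n−2} = z_{n−1} = z_n = 0}`. -/
def sphereCap (n : ℕ) : Set (EuclideanSpace ℂ (Fin n)) :=
  Metric.sphere (0 : EuclideanSpace ℂ (Fin n)) 1 ∩ lastThreeZero n

/-- Distance between distinct reciprocals of nonzero integers. -/
lemma recip_int_gap (a b : ℤ) (ha : a ≠ 0) (hb : b ≠ 0) (hne : a ≠ b) :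
    ((|b| : ℝ) * (|b| + 1))⁻¹ ≤ |((a : ℝ))⁻¹ - ((b : ℝ))⁻¹| := by
  have hA : (1 : ℝ) ≤ |(a : ℝ)| := by
    rw [← Int.cast_abs]; exact_mod_cast Int.one_le_abs ha
  have hB : (1 : ℝ) ≤ |(b : ℝ)| := by
    rw [← Int.cast_abs]; exact_mod_cast Int.one_le_abs hb
  have ha' : (a : ℝ) ≠ 0 := Int.cast_ne_zero.2 ha
  have hb' : (b : ℝ) ≠ 0 := Int.cast_ne_zero.2 hb
  have hA0 : (0 : ℝ) < |(a : ℝ)| := lt_of_lt_of_le one_pos hA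
  have hB0 : (0 : ℝ) < |(b : ℝ)| := lt_of_lt_of_le one_pos hB
  rcases le_total (|(a : ℝ)|) (|(b : ℝ)| + 1) with hc | hc
  · have h1 : (1 : ℝ) ≤ |(b : ℝ) - (a : ℝ)| := by
      rw [← Int.cast_sub, ← Int.cast_abs]
      exact_mod_cast Int.one_le_abs (sub_ne_zero.2 (Ne.symm hne))
    have heq : |((a : ℝ))⁻¹ - ((b : ℝ))⁻¹| = |(b : ℝ) - (a : ℝ)| / (|(a : ℝ)| * |(b : ℝ)|) := by
      have h0 : (a:ℝ)⁻¹ - (b:ℝ)⁻¹ = ((b:ℝ) - (a:ℝ))/((a:ℝ)*(b:ℝ)) := by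
        field_simp
      rw [h0, abs_div, abs_mul]
    rw [heq]
    rw [le_div_iff₀ (by positivity)]
    calc ((|b| : ℝ) * (|b| + 1))⁻¹ * (|(a : ℝ)| * |(b : ℝ)|)
        ≤ ((|b| : ℝ) * (|b| + 1))⁻¹ * ((|(b : ℝ)| + 1) * |(b : ℝ)|) := by
          have : (0:ℝ) ≤ ((|b| : ℝ) * (|b| + 1))⁻¹ := by positivity
          push_cast
          gcongr
      _ = 1 := by
          push_cast
          field_simp
      _ ≤ |(b : ℝ) - (a : ℝ)| := h1
  · -- |a| ≥ |b| + 1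
    have h2 : |((a : ℝ))⁻¹ - ((b : ℝ))⁻¹| ≥ |((b : ℝ))⁻¹| - |((a : ℝ))⁻¹| := by
      rw [abs_sub_comm]; exact abs_sub_abs_le_abs_sub _ _
    have h3 : |((b : ℝ))⁻¹| - |((a : ℝ))⁻¹| = (|(b : ℝ)|)⁻¹ - (|(a : ℝ)|)⁻¹ := by
      rw [abs_inv, abs_inv]
    have h4 : (|(a : ℝ)|)⁻¹ ≤ (|(b : ℝ)| + 1)⁻¹ := by
      apply inv_anti₀ (by positivity) hc
    have h5 : (|(b : ℝ)|)⁻¹ - (|(b : ℝ)| + 1)⁻¹ = (|(b : ℝ)| * (|(b : ℝ)| + 1))⁻¹ := by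
      field_simp
      ring
    push_cast
    push_cast at h5
    nlinarith [h2, h3, h4]

/-- The set of reciprocals of nonzero integers, away from 0, is its own closure. -/
lemma mem_recip_of_mem_closure {w : ℂ}
    (hw : w ∈ closure {t : ℂ | ∃ k : ℤ, k ≠ 0 ∧ t = ((k : ℂ))⁻¹}) (hw0 : w ≠ 0) :
    ∃ k : ℤ, k ≠ 0 ∧ w = ((k : ℂ))⁻¹ := by
  set T : Set ℂ := {t : ℂ | ∃ k : ℤ, k ≠ 0 ∧ t = ((k : ℂ))⁻¹}
  have hwpos : 0 < ‖w‖ := norm_pos_iff.2 hw0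
  set M : ℤ := ⌈2 / ‖w‖⌉ with hM
  set A : Set ℂ := (fun k : ℤ => ((k : ℂ))⁻¹) '' {k : ℤ | k ≠ 0 ∧ |k| ≤ M}
  have hAfin : A.Finite := by
    apply Set.Finite.image
    apply Set.Finite.subset (Set.finite_Icc (-M) M)
    intro k hk
    simp only [Set.mem_Icc]
    constructor
    · linarith [neg_abs_le k, hk.2]
    · linarith [le_abs_self k, hk.2]
  have hwA : w ∈ closure A := by
    rw [Metric.mem_closure_iff]
    intro ε hε
    rw [Metric.mem_closure_iff] at hw
    obtain ⟨t, ht, hdist⟩ := hw (min ε (‖w‖ / 2)) (by positivity)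
    obtain ⟨k, hk0, rfl⟩ := ht
    refine ⟨_, ⟨k, ⟨hk0, ?_⟩, rfl⟩, lt_of_lt_of_le hdist (min_le_left _ _)⟩
    -- ‖(k:ℂ)⁻¹‖ ≥ ‖w‖/2
    have h1 : ‖((k : ℂ))⁻¹‖ ≥ ‖w‖ / 2 := by
      have : dist w ((k:ℂ))⁻¹ < ‖w‖ / 2 := lt_of_lt_of_le hdist (min_le_right _ _)
      have h2 := norm_sub_norm_le w ((k:ℂ))⁻¹
      rw [dist_eq_norm] at this
      linarith
    have hk1 : (1 : ℝ) ≤ ‖(k : ℂ)‖ := by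
      rw [Complex.norm_intCast, ← Int.cast_abs]
      exact_mod_cast Int.one_le_abs hk0
    rw [norm_inv] at h1
    have h3 : ‖(k : ℂ)‖ ≤ 2 / ‖w‖ := by
      rw [ge_iff_le, le_inv_comm₀ (by positivity) (by linarith)] at h1
      calc ‖(k:ℂ)‖ ≤ (‖w‖/2)⁻¹ := h1
        _ = 2 / ‖w‖ := by rw [inv_div]
    have : ((|k| : ℤ) : ℝ) ≤ 2 / ‖w‖ := by
      rwa [Int.cast_abs, ← Complex.norm_intCast k] at *
      
    exact_mod_cast this.trans (Int.le_ceil _)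
  rw [hAfin.isClosed.closure_eq] at hwA
  obtain ⟨k, ⟨hk0, _⟩, rfl⟩ := hwA
  exact ⟨k, hk0, rfl⟩




variable {n : ℕ}

lemma isClosed_lastThreeZero : IsClosed (lastThreeZero n) := by
  have h : lastThreeZero n = ⋂ (i : Fin n) (_ : n - 3 ≤ (i : ℕ)),
      {z : EuclideanSpace ℂ (Fin n) | z i = 0} := by
    ext z; simp [lastThreeZero]
  rw [h]
  exact isClosed_iInter fun i => isClosed_iInter fun _ =>
    isClosed_eq (EuclideanSpace.proj i).continuous continuous_const

lemma sphereCap_nonempty (hn : 5 ≤ n) : (sphereCap n).Nonempty := by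
  refine ⟨EuclideanSpace.single (⟨0, by omega⟩ : Fin n) (1 : ℂ), ?_, ?_⟩
  · rw [mem_sphere_zero_iff_norm, EuclideanSpace.norm_single, norm_one]
  · intro i hi
    rw [EuclideanSpace.single_apply]
    rw [if_neg]
    intro h
    rw [h] at hi
    simp at hi
    omega

lemma coord_mem_Aalg (i : Fin n) :
    (fun w : EuclideanSpace ℂ (Fin n) => w i) ∈ Aalg n (Metric.ball 0 1) := by
  constructor
  · exact (EuclideanSpace.proj i).continuous.continuousOn
  · exact ((EuclideanSpace.proj i : EuclideanSpace ℂ (Fin n) →L[ℂ] ℂ)).differentiable.differentiableOn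

lemma sup_coord_sphereCap (hn : 5 ≤ n) (i : Fin n) (hi : n - 3 ≤ (i : ℕ)) :
    sSup ((fun w : EuclideanSpace ℂ (Fin n) => ‖w i‖) '' sphereCap n) = 0 := by
  have h : ((fun w : EuclideanSpace ℂ (Fin n) => ‖w i‖) '' sphereCap n) = {0} := by
    apply Subset.antisymm
    · rintro x ⟨w, hw, rfl⟩
      simp [hw.2 i hi]
    · rintro x rfl
      obtain ⟨w, hw⟩ := sphereCap_nonempty hn
      exact ⟨w, hw, by simp [hw.2 i hi]⟩
  rw [h, csSup_singleton]

lemma not_mem_hullA (hn : 5 ≤ n) {z : EuclideanSpace ℂ (Fin n)} {i : Fin n}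
    (hi : n - 3 ≤ (i : ℕ)) (hz : z i ≠ 0) :
    z ∉ hullA n (Metric.ball 0 1) (sphereCap n) := by
  intro h
  have := h.2 _ (coord_mem_Aalg i)
  rw [sup_coord_sphereCap hn i hi] at this
  exact hz (norm_le_zero_iff.1 this)

/-- The coordinate subspace as a submodule. -/
def lastThreeSubmodule (n : ℕ) : Submodule ℂ (EuclideanSpace ℂ (Fin n)) where
  carrier := lastThreeZero n
  add_mem' := by intro a b ha hb i hi; simp [PiLp.add_apply, ha i hi, hb i hi]
  zero_mem' := by intro i hi; simp
  smul_mem' := by intro c a ha i hi; simp [PiLp.smul_apply, ha i hi]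

lemma subset_hullA (hn : 5 ≤ n) :
    {z : EuclideanSpace ℂ (Fin n) | z ∈ lastThreeZero n ∧ ‖z‖ ≤ 1} ⊆
      hullA n (Metric.ball 0 1) (sphereCap n) := by
  intro z ⟨hz3, hz1⟩
  constructor
  · rw [closure_ball (0 : EuclideanSpace ℂ (Fin n)) one_ne_zero]
    exact mem_closedBall_zero_iff.2 hz1
  · intro f hf
    set K := lastThreeSubmodule n
    have hLsub : sphereCap n ⊆ closure (Metric.ball (0 : EuclideanSpace ℂ (Fin n)) 1) := by
      rw [closure_ball (0 : EuclideanSpace ℂ (Fin n)) one_ne_zero]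
      exact fun w hw => sphere_subset_closedBall hw.1
    have hbdd : BddAbove ((fun w => ‖f w‖) '' sphereCap n) := by
      apply IsCompact.bddAbove
      apply IsCompact.image_of_continuousOn
      · exact (isCompact_sphere 0 1).inter_right isClosed_lastThreeZero
      · exact (hf.1.mono hLsub).norm
    haveI : Nontrivial K := by
      refine ⟨⟨EuclideanSpace.single (⟨0, by omega⟩ : Fin n) (1 : ℂ), ?_⟩, 0, ?_⟩
      · intro i hi
        rw [EuclideanSpace.single_apply, if_neg]
        intro h
        rw [h] at hi
        simp at hi
        omega
      · intro h
        have h2 : EuclideanSpace.single (⟨0, by omega⟩ : Fin n) (1 : ℂ) =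
            (0 : EuclideanSpace ℂ (Fin n)) := congrArg Subtype.val h
        have := congrArg norm h2
        rw [EuclideanSpace.norm_single, norm_one, norm_zero] at this
        exact one_ne_zero this
    set zK : K := ⟨z, hz3⟩
    have hnormcoe : ∀ x : K, ‖x‖ = ‖(x : EuclideanSpace ℂ (Fin n))‖ := fun x => rfl
    have hd : DiffContOnCl ℂ (fun x : K => f (x : EuclideanSpace ℂ (Fin n)))
        (Metric.ball (0 : K) 1) := by
      constructor
      · apply DifferentiableOn.comp (t := Metric.ball (0 : EuclideanSpace ℂ (Fin n)) 1) hf.2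
        · exact K.subtypeL.differentiable.differentiableOn
        · intro x hx
          rw [mem_ball_zero_iff] at hx ⊢
          rwa [← hnormcoe]
      · rw [closure_ball (0 : K) one_ne_zero]
        apply ContinuousOn.comp (t := closure (Metric.ball (0 : EuclideanSpace ℂ (Fin n)) 1)) hf.1
        · exact K.subtypeL.continuous.continuousOn
        · intro x hx
          rw [mem_closedBall_zero_iff] at hx
          rw [closure_ball (0 : EuclideanSpace ℂ (Fin n)) one_ne_zero]
          rw [mem_closedBall_zero_iff, ← hnormcoe]
          exact hx
    have hC : ∀ x ∈ frontier (Metric.ball (0 : K) 1),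
        ‖f (x : EuclideanSpace ℂ (Fin n))‖ ≤ sSup ((fun w => ‖f w‖) '' sphereCap n) := by
      intro x hx
      rw [frontier_ball (0 : K) one_ne_zero, mem_sphere_zero_iff_norm] at hx
      apply le_csSup hbdd
      refine ⟨(x : EuclideanSpace ℂ (Fin n)), ⟨?_, x.2⟩, rfl⟩
      rw [mem_sphere_zero_iff_norm, ← hnormcoe]
      exact hx
    have hzc : zK ∈ closure (Metric.ball (0 : K) 1) := by
      rw [closure_ball (0 : K) one_ne_zero, mem_closedBall_zero_iff, hnormcoe]
      exact hz1
    exact Complex.norm_le_of_forall_mem_frontier_norm_le isBounded_ball hd hC hzc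

variable {n : ℕ}

/-- The set `Y`. -/
def Yn (n : ℕ) (hn : 5 ≤ n) : Set (EuclideanSpace ℂ (Fin n)) :=
  {z | z ∈ Metric.ball (0 : EuclideanSpace ℂ (Fin n)) 1 ∧
    ∃ k : ℤ, k ≠ 0 ∧ z ⟨n - 1, Nat.sub_lt (by omega) one_pos⟩ = ((k : ℂ))⁻¹ ∧
      ∀ i : Fin n, n - 3 ≤ (i : ℕ) → (i : ℕ) ≤ n - 2 → z i = 0}

lemma Yn_subset (hn : 5 ≤ n) :
    Yn n hn ⊆ Metric.ball 0 1 \ hullA n (Metric.ball 0 1) (sphereCap n) := by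
  rintro z ⟨hzb, k, hk0, hk3, hkz⟩
  refine ⟨hzb, not_mem_hullA hn (i := ⟨n - 1, by omega⟩) (by simp; omega) ?_⟩
  rw [hk3]
  exact inv_ne_zero (by simpa using hk0)

lemma closure_Yn (hn : 5 ≤ n) :
    closure (Yn n hn) ∩
      (Metric.ball 0 1 \ hullA n (Metric.ball 0 1) (sphereCap n)) = Yn n hn := by
  apply Subset.antisymm
  · rintro z ⟨hzc, hzb, hzh⟩
    have hz1 : z ⟨n - 3, by omega⟩ = 0 := by
      refine closure_minimal (fun y hy => ?_)
        (isClosed_eq (EuclideanSpace.proj (⟨n - 3, by omega⟩ : Fin n)).continuous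
          continuous_const) hzc
      obtain ⟨-, k, -, -, hkz⟩ := hy
      exact hkz _ le_rfl (by simp; omega)
    have hz2 : z ⟨n - 2, by omega⟩ = 0 := by
      refine closure_minimal (fun y hy => ?_)
        (isClosed_eq (EuclideanSpace.proj (⟨n - 2, by omega⟩ : Fin n)).continuous
          continuous_const) hzc
      obtain ⟨-, k, -, -, hkz⟩ := hy
      exact hkz _ (by simp; omega) (by simp)
    have hz3 : z ⟨n - 1, by omega⟩ ∈ closure {t : ℂ | ∃ k : ℤ, k ≠ 0 ∧ t = ((k : ℂ))⁻¹} := by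
      have hcont : Continuous (fun w : EuclideanSpace ℂ (Fin n) => w ⟨n - 1, by omega⟩) :=
        (EuclideanSpace.proj (⟨n - 1, by omega⟩ : Fin n)).continuous
      have hmaps : Set.MapsTo (fun w : EuclideanSpace ℂ (Fin n) => w ⟨n - 1, by omega⟩)
          (Yn n hn) {t : ℂ | ∃ k : ℤ, k ≠ 0 ∧ t = ((k : ℂ))⁻¹} := by
        rintro y ⟨-, k, hk0, hk3, -⟩
        exact ⟨k, hk0, hk3⟩
      have key : (fun w : EuclideanSpace ℂ (Fin n) => w ⟨n - 1, by omega⟩) z ∈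
          closure {t : ℂ | ∃ k : ℤ, k ≠ 0 ∧ t = ((k : ℂ))⁻¹} :=
        map_mem_closure (f := fun w : EuclideanSpace ℂ (Fin n) => w ⟨n - 1, by omega⟩)
          hcont hzc hmaps
      exact key
    by_cases h0 : z ⟨n - 1, by omega⟩ = 0
    · exfalso
      apply hzh
      apply subset_hullA hn
      refine ⟨?_, le_of_lt (mem_ball_zero_iff.1 hzb)⟩
      intro i hi
      have hlt := i.isLt
      have : (i : ℕ) = n - 3 ∨ (i : ℕ) = n - 2 ∨ (i : ℕ) = n - 1 := by omega
      rcases this with h | h | h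
      · have : i = ⟨n - 3, by omega⟩ := Fin.ext h
        rw [this]; exact hz1
      · have : i = ⟨n - 2, by omega⟩ := Fin.ext h
        rw [this]; exact hz2
      · have : i = ⟨n - 1, by omega⟩ := Fin.ext h
        rw [this]; exact h0
    · obtain ⟨k, hk0, hk⟩ := mem_recip_of_mem_closure hz3 h0
      refine ⟨hzb, k, hk0, hk, fun i hi hi2 => ?_⟩
      have : (i : ℕ) = n - 3 ∨ (i : ℕ) = n - 2 := by omega
      rcases this with h | h
      · have : i = ⟨n - 3, by omega⟩ := Fin.ext h
        rw [this]; exact hz1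
      · have : i = ⟨n - 2, by omega⟩ := Fin.ext h
        rw [this]; exact hz2
  · intro z hz
    exact ⟨subset_closure hz, Yn_subset hn hz⟩


lemma norm_recip_sub_recip (k k₀ : ℤ) :
    ‖((k : ℂ))⁻¹ - ((k₀ : ℂ))⁻¹‖ = |((k : ℝ))⁻¹ - ((k₀ : ℝ))⁻¹| := by
  have : ((k : ℂ))⁻¹ - ((k₀ : ℂ))⁻¹ = ((((k : ℝ))⁻¹ - ((k₀ : ℝ))⁻¹ : ℝ) : ℂ) := by
    push_cast; ring
  rw [this, Complex.norm_real, Real.norm_eq_abs]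

lemma analytic_Yn (hn : 5 ≤ n) :
    IsAnalyticSubset n (Metric.ball 0 1 \ hullA n (Metric.ball 0 1) (sphereCap n))
      (Yn n hn) := by
  refine ⟨Yn_subset hn, ?_⟩
  intro z hz
  have hzcl : z ∈ closure (Metric.ball (0 : EuclideanSpace ℂ (Fin n)) 1) :=
    subset_closure hz.1
  obtain ⟨f, hfA, hflt⟩ :
      ∃ f ∈ Aalg n (Metric.ball 0 1),
        sSup ((fun w => ‖f w‖) '' sphereCap n) < ‖f z‖ := by
    by_contra h
    push_neg at h
    exact hz.2 ⟨hzcl, h⟩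
  set C := sSup ((fun w => ‖f w‖) '' sphereCap n) with hC
  set U₀ : Set (EuclideanSpace ℂ (Fin n)) :=
    Metric.ball 0 1 ∩ f ⁻¹' {c : ℂ | C < ‖c‖} with hU₀
  have hU₀open : IsOpen U₀ :=
    (hfA.1.mono subset_closure).isOpen_inter_preimage isOpen_ball
      (isOpen_lt continuous_const continuous_norm)
  have hU₀sub : U₀ ⊆ Metric.ball 0 1 \ hullA n (Metric.ball 0 1) (sphereCap n) := by
    rintro w ⟨hwb, hwf⟩
    refine ⟨hwb, fun hw => ?_⟩
    exact absurd (hw.2 f hfA) (not_le.2 hwf)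
  have hzU₀ : z ∈ U₀ := ⟨hz.1, hflt⟩
  by_cases hzY : z ∈ Yn n hn
  · obtain ⟨-, k₀, hk₀0, hk₀3, -⟩ := hzY
    set δ : ℝ := ((|k₀| : ℝ) * (|k₀| + 1))⁻¹ with hδ
    have hδ0 : 0 < δ := by
      have : (1 : ℝ) ≤ (|k₀| : ℝ) := by exact_mod_cast Int.one_le_abs hk₀0
      positivity
    set U : Set (EuclideanSpace ℂ (Fin n)) :=
      U₀ ∩ (fun w : EuclideanSpace ℂ (Fin n) => w ⟨n - 1, by omega⟩) ⁻¹'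
        Metric.ball ((k₀ : ℂ))⁻¹ δ with hU
    refine ⟨U, ?_, ⟨hzU₀, ?_⟩, fun w hw => hU₀sub hw.1, Fin 3,
      ![fun w => w ⟨n - 3, by omega⟩, fun w => w ⟨n - 2, by omega⟩,
        fun w => w ⟨n - 1, by omega⟩ - ((k₀ : ℂ))⁻¹], ?_, ?_⟩
    · exact hU₀open.inter
        ((EuclideanSpace.proj (⟨n - 1, by omega⟩ : Fin n)).continuous.isOpen_preimage _
          isOpen_ball)
    · simp only [Set.mem_preimage]
      rw [hk₀3]
      exact Metric.mem_ball_self hδ0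
    · intro i
      fin_cases i
      · exact ((EuclideanSpace.proj (⟨n - 3, by omega⟩ : Fin n)
          : EuclideanSpace ℂ (Fin n) →L[ℂ] ℂ)).differentiable.differentiableOn
      · exact ((EuclideanSpace.proj (⟨n - 2, by omega⟩ : Fin n)
          : EuclideanSpace ℂ (Fin n) →L[ℂ] ℂ)).differentiable.differentiableOn
      · exact (((EuclideanSpace.proj (⟨n - 1, by omega⟩ : Fin n)
          : EuclideanSpace ℂ (Fin n) →L[ℂ] ℂ)).differentiable.sub_const _).differentiableOn
    · ext w
      constructor
      · rintro ⟨⟨hwb, k, hk0, hk3, hkz⟩, hwU⟩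
        have hkk₀ : k = k₀ := by
          have hdist : dist (w ⟨n - 1, by omega⟩) ((k₀ : ℂ))⁻¹ < δ := hwU.2
          rw [hk3, dist_eq_norm, norm_recip_sub_recip] at hdist
          by_contra hne
          exact absurd hdist (not_lt.2 (recip_int_gap k k₀ hk0 hk₀0 hne))
        refine ⟨hwU, ?_⟩
        intro i
        fin_cases i
        · exact hkz _ le_rfl (by simp; omega)
        · exact hkz _ (by simp; omega) (by simp)
        · show w ⟨n - 1, by omega⟩ - ((k₀ : ℂ))⁻¹ = 0
          rw [hk3, hkk₀, sub_self]
      · rintro ⟨hwU, hg⟩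
        have h0 : w ⟨n - 3, by omega⟩ = 0 := hg 0
        have h1 : w ⟨n - 2, by omega⟩ = 0 := hg 1
        have h2 : w ⟨n - 1, by omega⟩ - ((k₀ : ℂ))⁻¹ = 0 := hg 2
        refine ⟨⟨hwU.1.1, k₀, hk₀0, by rwa [sub_eq_zero] at h2, fun i hi hi2 => ?_⟩, hwU⟩
        have : (i : ℕ) = n - 3 ∨ (i : ℕ) = n - 2 := by omega
        rcases this with h | h
        · have : i = ⟨n - 3, by omega⟩ := Fin.ext h
          rw [this]; exact h0
        · have : i = ⟨n - 2, by omega⟩ := Fin.ext h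
          rw [this]; exact h1
  · have hzc : z ∉ closure (Yn n hn) := by
      intro hc
      exact hzY (closure_Yn hn ▸ (⟨hc, hz⟩ : _ ∈ closure (Yn n hn) ∩ _))
    refine ⟨U₀ ∩ (closure (Yn n hn))ᶜ, hU₀open.inter isClosed_closure.isOpen_compl,
      ⟨hzU₀, hzc⟩, fun w hw => hU₀sub hw.1, PUnit, fun _ _ => 1, fun _ => ?_, ?_⟩
    · exact differentiableOn_const 1
    · ext w
      constructor
      · rintro ⟨hwY, hwU⟩
        exact absurd (subset_closure hwY) hwU.2
      · rintro ⟨hwU, hg⟩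
        exact absurd (hg PUnit.unit) one_ne_zero

lemma not_extendable (hn : 5 ≤ n) :
    ¬ ∃ Y' : Set (EuclideanSpace ℂ (Fin n)),
        closure Y' ∩ (Metric.ball 0 1 \ sphereCap n) = Y' ∧
        IsAnalyticSubset n (Metric.ball 0 1 \ sphereCap n) Y' ∧
        Y' ∩ (Metric.ball 0 1 \ hullA n (Metric.ball 0 1) (sphereCap n)) = Yn n hn := by
  rintro ⟨Y', hYc, ⟨hY'sub, hY'loc⟩, hYY⟩
  have h0mem : (0 : EuclideanSpace ℂ (Fin n)) ∈ Metric.ball (0 : EuclideanSpace ℂ (Fin n)) 1 \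
      sphereCap n := by
    refine ⟨mem_ball_self one_pos, ?_⟩
    rintro ⟨h1, -⟩
    rw [mem_sphere_zero_iff_norm, norm_zero] at h1
    exact zero_ne_one h1
  obtain ⟨U, hUo, hU0, hUsub, ι, g, hgd, hgz⟩ := hY'loc 0 h0mem
  obtain ⟨ε, hε0, hεU⟩ := Metric.isOpen_iff.1 hUo 0 hU0
  set r : ℝ := min (ε / 2) (1 / 2) with hrdef
  have hr0 : 0 < r := lt_min (by positivity) (by norm_num)
  have hr1 : r < 1 := lt_of_le_of_lt (min_le_right _ _) (by norm_num)
  have hrU : Metric.ball (0 : EuclideanSpace ℂ (Fin n)) r ⊆ U := by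
    refine Subset.trans (Metric.ball_subset_ball ?_) hεU
    calc r ≤ ε / 2 := min_le_left _ _
      _ ≤ ε := by linarith
  set i3 : Fin n := ⟨n - 1, by omega⟩ with hi3
  set e : EuclideanSpace ℂ (Fin n) := EuclideanSpace.single i3 (1 : ℂ) with he
  set φ : ℂ → EuclideanSpace ℂ (Fin n) := fun lam => lam • e with hφ
  have hφnorm : ∀ lam : ℂ, ‖φ lam‖ = ‖lam‖ := by
    intro lam
    rw [hφ]
    simp only [norm_smul, he, EuclideanSpace.norm_single, norm_one, mul_one]
  have hφc3 : ∀ lam : ℂ, φ lam i3 = lam := by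
    intro lam
    simp [hφ, he, EuclideanSpace.single_apply]
  have hφco : ∀ (lam : ℂ) (i : Fin n), i ≠ i3 → φ lam i = 0 := by
    intro lam i hi
    simp [hφ, he, EuclideanSpace.single_apply, hi]
  have hYsub' : Yn n hn ⊆ Y' := by
    intro w hw
    rw [← hYY] at hw
    exact hw.1
  have hφY : ∀ k : ℤ, 2 ≤ k → φ ((k : ℂ))⁻¹ ∈ Yn n hn := by
    intro k hk
    have hk2 : (2 : ℝ) ≤ ‖(k : ℂ)‖ := by
      rw [Complex.norm_intCast, ← Int.cast_abs]
      exact_mod_cast le_trans hk (le_abs_self k)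
    have hknorm : ‖((k : ℂ))⁻¹‖ < 1 := by
      rw [norm_inv]
      calc ‖(k : ℂ)‖⁻¹ ≤ 2⁻¹ := by
            apply inv_anti₀ (by norm_num) hk2
        _ < 1 := by norm_num
    refine ⟨mem_ball_zero_iff.2 (by rwa [hφnorm]), k, by omega, hφc3 _, ?_⟩
    intro i hi hi2
    apply hφco
    intro h
    rw [h, hi3] at hi2
    simp at hi2
    omega
  have hgφ : ∀ (i : ι) (k : ℤ), 2 ≤ k → ((k : ℝ))⁻¹ < r → g i (φ ((k : ℂ))⁻¹) = 0 := by
    intro i k hk hkr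
    have hmem : φ ((k : ℂ))⁻¹ ∈ Y' ∩ U := by
      refine ⟨hYsub' (hφY k hk), hrU ?_⟩
      rw [mem_ball_zero_iff, hφnorm, norm_inv, Complex.norm_intCast, ← Int.cast_abs,
        abs_of_pos (by omega : (0:ℤ) < k)]
      exact hkr
    rw [hgz] at hmem
    exact hmem.2 i
  have hφdiff : Differentiable ℂ φ := differentiable_id.smul_const e
  have hEq : ∀ i : ι, EqOn (fun lam : ℂ => g i (φ lam)) 0 (Metric.ball (0 : ℂ) r) := by
    intro i
    have hdiff : DifferentiableOn ℂ (fun lam => g i (φ lam)) (Metric.ball (0 : ℂ) r) := by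
      apply DifferentiableOn.comp (hgd i) hφdiff.differentiableOn
      intro lam hl
      apply hrU
      rw [mem_ball_zero_iff, hφnorm]
      exact mem_ball_zero_iff.1 hl
    have hana := hdiff.analyticOnNhd isOpen_ball
    apply hana.eqOn_zero_of_preconnected_of_frequently_eq_zero
      (convex_ball (0 : ℂ) r).isPreconnected (mem_ball_self hr0)
    have htend0 : Filter.Tendsto (fun j : ℕ => ((j : ℂ))⁻¹) Filter.atTop (nhds 0) :=
      tendsto_inv_atTop_nhds_zero_nat (𝕜 := ℂ)
    have htend : Filter.Tendsto (fun j : ℕ => ((j : ℂ))⁻¹) Filter.atTop (nhdsWithin 0 {(0:ℂ)}ᶜ) := by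
      apply tendsto_nhdsWithin_of_tendsto_nhds_of_eventually_within _ htend0
      filter_upwards [Filter.eventually_ge_atTop 1] with j hj
      simp only [Set.mem_compl_iff, Set.mem_singleton_iff]
      exact inv_ne_zero (by exact_mod_cast Nat.one_le_iff_ne_zero.1 hj)
    apply htend.frequently
    apply Filter.Eventually.frequently
    obtain ⟨N, hN⟩ := exists_nat_gt (1 / r)
    filter_upwards [Filter.eventually_ge_atTop (max 2 N)] with j hj
    have hj2 : 2 ≤ j := le_trans (le_max_left _ _) hj
    have hjN : (N : ℝ) ≤ (j : ℝ) := by exact_mod_cast le_trans (le_max_right _ _) hj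
    have hjr : ((j : ℝ))⁻¹ < r := by
      have h1r : 1 / r < (j : ℝ) := lt_of_lt_of_le hN hjN
      have hj0 : (0 : ℝ) < j := by
        have : (0:ℕ) < j := by omega
        exact_mod_cast this
      calc ((j : ℝ))⁻¹ < (1 / r)⁻¹ := by
            apply inv_strictAnti₀ (by positivity) h1r
        _ = r := by rw [one_div, inv_inv]
    have := hgφ i (j : ℤ) (by exact_mod_cast hj2) (by push_cast; exact hjr)
    have hjj : (((j : ℤ) : ℂ)) = ((j : ℕ) : ℂ) := by push_cast; ring
    rw [hjj] at this
    exact this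
  set lam0 : ℂ := ((r / 2 : ℝ) : ℂ) * Complex.I with hlam0
  have hlam0norm : ‖lam0‖ = r / 2 := by
    rw [hlam0, norm_mul, Complex.norm_I, mul_one, Complex.norm_real, Real.norm_eq_abs,
      abs_of_pos (by positivity)]
  have hlam0mem : lam0 ∈ Metric.ball (0 : ℂ) r := by
    rw [mem_ball_zero_iff, hlam0norm]
    linarith
  have hqU : φ lam0 ∈ U := by
    apply hrU
    rw [mem_ball_zero_iff, hφnorm, hlam0norm]
    linarith
  have hgq : ∀ i : ι, g i (φ lam0) = 0 := fun i => hEq i hlam0mem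
  have hqY' : φ lam0 ∈ Y' := by
    have hmem : φ lam0 ∈ {w ∈ U | ∀ i, g i w = 0} := ⟨hqU, hgq⟩
    rw [← hgz] at hmem
    exact hmem.1
  have hlam0ne : lam0 ≠ 0 := by
    rw [hlam0]
    exact mul_ne_zero (Complex.ofReal_ne_zero.2 (by positivity)) Complex.I_ne_zero
  have hqball : φ lam0 ∈ Metric.ball (0 : EuclideanSpace ℂ (Fin n)) 1 := by
    rw [mem_ball_zero_iff, hφnorm, hlam0norm]
    linarith
  have hqhull : φ lam0 ∉ hullA n (Metric.ball 0 1) (sphereCap n) := by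
    apply not_mem_hullA hn (i := i3) (by simp [hi3]; omega)
    rw [hφc3]
    exact hlam0ne
  have hqY : φ lam0 ∈ Yn n hn := by
    rw [← hYY]
    exact ⟨hqY', hqball, hqhull⟩
  obtain ⟨-, k, hk0, hk3, -⟩ := hqY
  rw [hφc3] at hk3
  have him := congrArg Complex.im hk3
  simp only [hlam0, Complex.mul_I_im, Complex.ofReal_re, Complex.inv_im, Complex.intCast_im,
    neg_zero, zero_div] at him
  have : (0:ℝ) < r / 2 := by positivity
  rw [him] at this
  exact lt_irrefl 0 this


/-- in `ℂⁿ`, `n ≥ 5`, with `L = ∂𝔹ⁿ ∩ {z_{n−2} = z_{n−1} = z_n = 0}`, the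
`A(𝔹ⁿ)`-hull `ĤL` contains `{z_{n−2} = z_{n−1} = z_n = 0, |z| ≤ 1}`; the locally finite
union `Y = ⋃_{k ≠ 0} {z ∈ 𝔹ⁿ : z_{n−2} = z_{n−1} = 0, z_n = 1/k}` is a closed analytic
subset of `𝔹ⁿ ∖ ĤL` that does not extend to a closed analytic subset of `𝔹ⁿ ∖ L`. -/
theorem codim_three_slices_not_removable (n : ℕ) (hn : 5 ≤ n) :
    ({z : EuclideanSpace ℂ (Fin n) | z ∈ lastThreeZero n ∧ ‖z‖ ≤ 1} ⊆
        hullA n (Metric.ball 0 1) (sphereCap n)) ∧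
    (closure {z : EuclideanSpace ℂ (Fin n) |
          z ∈ Metric.ball (0 : EuclideanSpace ℂ (Fin n)) 1 ∧
          ∃ k : ℤ, k ≠ 0 ∧ z ⟨n - 1, by omega⟩ = ((k : ℂ))⁻¹ ∧
            ∀ i : Fin n, n - 3 ≤ (i : ℕ) → (i : ℕ) ≤ n - 2 → z i = 0} ∩
        (Metric.ball 0 1 \ hullA n (Metric.ball 0 1) (sphereCap n)) =
      {z : EuclideanSpace ℂ (Fin n) |
          z ∈ Metric.ball (0 : EuclideanSpace ℂ (Fin n)) 1 ∧
          ∃ k : ℤ, k ≠ 0 ∧ z ⟨n - 1, by omega⟩ = ((k : ℂ))⁻¹ ∧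
            ∀ i : Fin n, n - 3 ≤ (i : ℕ) → (i : ℕ) ≤ n - 2 → z i = 0}) ∧
    IsAnalyticSubset n
      (Metric.ball 0 1 \ hullA n (Metric.ball 0 1) (sphereCap n))
      {z : EuclideanSpace ℂ (Fin n) |
          z ∈ Metric.ball (0 : EuclideanSpace ℂ (Fin n)) 1 ∧
          ∃ k : ℤ, k ≠ 0 ∧ z ⟨n - 1, by omega⟩ = ((k : ℂ))⁻¹ ∧
            ∀ i : Fin n, n - 3 ≤ (i : ℕ) → (i : ℕ) ≤ n - 2 → z i = 0} ∧
    ¬ ∃ Y' : Set (EuclideanSpace ℂ (Fin n)),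
        closure Y' ∩ (Metric.ball 0 1 \ sphereCap n) = Y' ∧
        IsAnalyticSubset n (Metric.ball 0 1 \ sphereCap n) Y' ∧
        Y' ∩ (Metric.ball 0 1 \ hullA n (Metric.ball 0 1) (sphereCap n)) =
          {z : EuclideanSpace ℂ (Fin n) |
              z ∈ Metric.ball (0 : EuclideanSpace ℂ (Fin n)) 1 ∧
              ∃ k : ℤ, k ≠ 0 ∧ z ⟨n - 1, by omega⟩ = ((k : ℂ))⁻¹ ∧
                ∀ i : Fin n, n - 3 ≤ (i : ℕ) → (i : ℕ) ≤ n - 2 → z i = 0} := by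
  exact ⟨subset_hullA hn, closure_Yn hn, analytic_Yn hn, not_extendable hn⟩
end
end
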